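/- Let n ≥ 3 be an integer and 0 ≤ k ≤ n−2. Let A_1,…,A_n be real numbers with A_{k+1} > A_i > A_n for every i ∈ {1,…,n−1}\{k+1}. Define the (n−1)-tuples Z = (A_k, A_{k−1}, …, A_1, A_n, A_{n−1}, …, A_{k+2}) (i.e. Z_p = A_{⟨k+1−p⟩} where ⟨m⟩ is the representative of m modulo n in {1,…,n}) and W = (A_n, A_n, …, A_n). Then the tropical map Φ(n,k) sends (Z,W) to (W,Z): the output state Y′ defined by Y′_j = W_j + min(Z_{k+2−j}, W_{j−1}) − min(Z_{k+1−j}, W_j) equals W componentwise, and the output carrier Z′ defined by Z′_j = Z_j + min(Z_{j+1}, W_{k−j}) − min(Z_j, W_{k+1−j}) equals Z componentwise (with subscripts modulo n and the convention Z_n = W_n = +∞, meaning such terms are omitted from the minima). That is, (W,Z) is a tropical commuting pair for Φ(n,k). -/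
import Mathlib


/-- The tropical commuting pair (vacuum state `W`, initial carrier `Z`) for `Φ(n,k)`.
Tuples of length `n-1` are modelled as functions on `ZMod n` with values in `EReal`;
the index class `0` corresponds to the subscript `n`, where the convention
`Z_n = W_n = +∞` holds (so such terms are omitted from the minima).
`A` is indexed by `ZMod n`, with `A 0 = A_n`. -/
theorem stmt_1 (n k : ℕ) (hn : 3 ≤ n) (hk : k ≤ n - 2)
    (A : ZMod n → ℝ)
    (hA : ∀ i : ZMod n, i ≠ 0 → i ≠ ((k + 1 : ℕ) : ZMod n) →
      A i < A ((k + 1 : ℕ) : ZMod n) ∧ A 0 < A i)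
    (Z W : ZMod n → EReal)
    (hZ0 : Z 0 = ⊤) (hW0 : W 0 = ⊤)
    (hZ : ∀ p : ZMod n, p ≠ 0 →
      Z p = ((A (((k + 1 : ℕ) : ZMod n) - p) : ℝ) : EReal))
    (hW : ∀ p : ZMod n, p ≠ 0 → W p = ((A 0 : ℝ) : EReal)) :
    ∀ j : ZMod n, j ≠ 0 →
      W j + min (Z (((k + 2 : ℕ) : ZMod n) - j)) (W (j - 1)) -
          min (Z (((k + 1 : ℕ) : ZMod n) - j)) (W j) = W j ∧
      Z j + min (Z (j + 1)) (W (((k : ℕ) : ZMod n) - j)) -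
          min (Z j) (W (((k + 1 : ℕ) : ZMod n) - j)) = Z j := by
  intro j hj
  haveI : NeZero n := ⟨by omega⟩
  set c : ZMod n := ((k + 1 : ℕ) : ZMod n) with hc
  -- basic nonzero facts
  have hnat : ∀ m : ℕ, 0 < m → m < n → ((m : ZMod n) ≠ 0) := by
    intro m hm1 hm2 h
    have := (ZMod.natCast_eq_zero_iff m n).mp h
    have := Nat.le_of_dvd hm1 this
    omega
  have hcne : c ≠ 0 := hnat (k + 1) (by omega) (by omega)
  -- A 0 < A c
  have h1 : (1 : ZMod n) ≠ 0 := by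
    simpa using hnat 1 (by omega) (by omega)
  have h2 : (2 : ZMod n) ≠ 0 := by
    simpa using hnat 2 (by omega) (by omega)
  have h12 : (1 : ZMod n) ≠ 2 := by
    intro h
    apply h1
    have h' : (2 : ZMod n) - 1 = 0 := sub_eq_zero.mpr h.symm
    calc (1 : ZMod n) = 2 - 1 := by ring
      _ = 0 := h'
  have hAc : A 0 < A c := by
    by_cases hc1 : c = 1
    · have := hA 2 h2 (by rw [hc1]; exact fun h => h12 h.symm)
      exact this.2.trans this.1
    · have := hA 1 h1 (fun h => hc1 h.symm)
      exact this.2.trans this.1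
  have hA0 : ∀ i : ZMod n, i ≠ 0 → A 0 < A i := by
    intro i hi
    by_cases h : i = c
    · rw [h]; exact hAc
    · exact (hA i hi h).2
  -- the key min computation
  have hmin : ∀ p : ZMod n, min (Z p) ((A 0 : ℝ) : EReal) = ((A 0 : ℝ) : EReal) := by
    intro p
    by_cases hp : p = 0
    · rw [hp, hZ0]; exact min_eq_right le_top
    · rw [hZ p hp]
      apply min_eq_right
      by_cases h : c - p = 0
      · rw [h]
      · exact_mod_cast le_of_lt (hA0 _ h)
  have hZc : Z c = ((A 0 : ℝ) : EReal) := by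
    rw [hZ c hcne]; norm_num
  have h2c : ((k + 2 : ℕ) : ZMod n) = c + 1 := by
    rw [hc]; push_cast; ring
  have hkc : ((k : ℕ) : ZMod n) = c - 1 := by
    rw [hc]; push_cast; ring
  -- all four minima equal A 0
  have m1 : min (Z (((k + 2 : ℕ) : ZMod n) - j)) (W (j - 1)) = ((A 0 : ℝ) : EReal) := by
    by_cases hj1 : j = 1
    · rw [hj1, h2c]
      simp only [add_sub_cancel_right, sub_self, hW0, hZc]
      exact min_eq_left le_top
    · rw [hW (j - 1) (fun h => hj1 (by rwa [sub_eq_zero] at h))]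
      exact hmin _
  have m2 : min (Z (c - j)) (W j) = ((A 0 : ℝ) : EReal) := by
    rw [hW j hj]; exact hmin _
  have m3 : min (Z (j + 1)) (W (((k : ℕ) : ZMod n) - j)) = ((A 0 : ℝ) : EReal) := by
    by_cases hjk : ((k : ℕ) : ZMod n) - j = 0
    · have hj1 : j + 1 = c := by
        rw [hkc] at hjk
        have := sub_eq_zero.mp hjk
        rw [← this]; ring
      rw [hjk, hW0, hj1, hZc]
      exact min_eq_left le_top
    · rw [hW _ hjk]; exact hmin _
  have m4 : min (Z j) (W (c - j)) = ((A 0 : ℝ) : EReal) := by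
    by_cases hjc : j = c
    · rw [hjc, sub_self, hW0, hZc]
      exact min_eq_left le_top
    · have hne : c - j ≠ 0 := fun h => hjc (sub_eq_zero.mp h).symm
      rw [hW _ hne]
      exact hmin _
  rw [m1, m2, m3, m4, hW j hj, hZ j hj]
  constructor
  · norm_cast; ring
  · norm_cast; ring
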